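/- Let H be a Hilbert space and Π a bounded idempotent on H. Let Π₀ be the orthogonal projection onto the range of Π. Then Π₀ = Π Π* B⁻¹ where B = 1 + (Π − Π*)(Π* − Π). -/

import Mathlib

open ContinuousLinearMap

/-- Let `P` be a bounded idempotent on a complex Hilbert space `H` and let
`P₀` be the orthogonal projection onto the range of `P` (characterized as the self-adjoint
idempotent with the same range as `P`).  Then `P₀ = P P* B⁻¹` where
`B = 1 + (P − P*)(P* − P)`. -/
theorem stmt1 {H : Type*} [NormedAddCommGroup H] [InnerProductSpace ℂ H] [CompleteSpace H]
    (P P₀ : H →L[ℂ] H) (hP : P * P = P)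
    (hP₀idem : P₀ * P₀ = P₀) (hP₀sa : adjoint P₀ = P₀)
    (hrange : LinearMap.range (P₀ : H →ₗ[ℂ] H) = LinearMap.range (P : H →ₗ[ℂ] H)) :
    P₀ = P * adjoint P *
      Ring.inverse ((1 : H →L[ℂ] H) + (P - adjoint P) * (adjoint P - P)) := by
  set Q := adjoint P with hQdef
  set B : H →L[ℂ] H := 1 + (P - Q) * (Q - P) with hBdef
  -- range facts
  have hP₀P : P₀ * P = P := by
    ext x
    have hx : P x ∈ LinearMap.range (P₀ : H →ₗ[ℂ] H) := by
      rw [hrange]; exact ⟨x, rfl⟩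
    obtain ⟨y, hy⟩ := hx
    simp only [ContinuousLinearMap.mul_apply, ContinuousLinearMap.coe_coe] at hy ⊢
    rw [← hy, ← ContinuousLinearMap.mul_apply P₀ P₀, hP₀idem]
  have hPP₀ : P * P₀ = P₀ := by
    ext x
    have hx : P₀ x ∈ LinearMap.range (P : H →ₗ[ℂ] H) := by
      rw [← hrange]; exact ⟨x, rfl⟩
    obtain ⟨y, hy⟩ := hx
    simp only [ContinuousLinearMap.mul_apply, ContinuousLinearMap.coe_coe] at hy ⊢
    rw [← hy, ← ContinuousLinearMap.mul_apply P P, hP]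
  have hP₀Q : P₀ * Q = P₀ := by
    have := congrArg star hPP₀
    rwa [star_mul, star_eq_adjoint P, ← hQdef, star_eq_adjoint P₀, hP₀sa] at this
  have hQ : Q * Q = Q := by
    have := congrArg star hP
    rwa [star_mul, star_eq_adjoint, ← hQdef] at this
  -- key identity : P₀ * B = P * Q
  have expand : B = 1 + P * Q + Q * P - P - Q := by
    have h1 : (P - Q) * (Q - P) = P * Q - P * P - Q * Q + Q * P := by noncomm_ring
    rw [hBdef, h1, hP, hQ]; abel
  have key : P₀ * B = P * Q := by
    have h1 : P₀ * B = P₀ * 1 + P₀ * P * Q + P₀ * Q * P - P₀ * P - P₀ * Q := by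
      rw [expand]; noncomm_ring
    rw [h1, hP₀P, hP₀Q, hP₀P, mul_one]; abel
  -- invertibility of B
  have hstar : star (Q - P) = P - Q := by
    simp only [star_sub, hQdef, star_eq_adjoint, adjoint_adjoint]
  have hBnonneg : (1 : H →L[ℂ] H) ≤ B := by
    rw [hBdef]
    have : (0 : H →L[ℂ] H) ≤ (P - Q) * (Q - P) := by
      rw [← hstar]; exact star_mul_self_nonneg _
    exact le_add_of_nonneg_right this
  have hB : IsUnit B :=
    CStarAlgebra.isUnit_of_le 1 hBnonneg isStrictlyPositive_one
  calc P₀ = P₀ * B * Ring.inverse B := by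
            rw [mul_assoc, Ring.mul_inverse_cancel _ hB, mul_one]
    _ = P * Q * Ring.inverse B := by rw [key]
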